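/- Let w ∈ E⁺ admit a factorisation w = uev with u, v ∈ E* and e ∈ E such that ē 𝓓 w̄ in IG(E). Then w̄ is a regular element of IG(E), and (ue)‾ 𝓛 ē 𝓡 (ev)‾ in IG(E) (so the occurrence of e is a seed of w). -/

import Mathlib

section Green

variable {T : Type*} [Semigroup T]

/-- Green's relation 𝓡. -/
def GreenR (a b : T) : Prop := a = b ∨ ∃ x y : T, a * x = b ∧ b * y = a

/-- Green's relation 𝓛. -/
def GreenL (a b : T) : Prop := a = b ∨ ∃ x y : T, x * a = b ∧ y * b = a

/-- Green's relation 𝓓 = 𝓡 ∘ 𝓛. -/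
def GreenD (a b : T) : Prop := ∃ c : T, GreenR a c ∧ GreenL c b

/-- An element is regular if `a = a * b * a` for some `b`. -/
def IsRegularElem (a : T) : Prop := ∃ b : T, a * b * a = a

/-- The principal two-sided ideal `T¹ a T¹`. -/
def principalIdeal (a : T) : Set T :=
  {x | x = a ∨ (∃ u, u * a = x) ∨ (∃ v, a * v = x) ∨ ∃ u v, u * a * v = x}

/-- Green's relation 𝓙. -/
def GreenJ (a b : T) : Prop := principalIdeal a = principalIdeal b

/-- The 𝓙-preorder. -/
def JleRel (a b : T) : Prop := principalIdeal a ⊆ principalIdeal b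

/-- Strict 𝓙-order. -/
def JltRel (a b : T) : Prop := JleRel a b ∧ ¬ JleRel b a

/-- `u` is a (two-sided) identity element. -/
def IsIdentityElem (u : T) : Prop := ∀ x : T, u * x = x ∧ x * u = x

/-- The relation 𝓡̃. -/
def RTilde (a b : T) : Prop := ∀ ε : T, ε * ε = ε → (ε * a = a ↔ ε * b = b)

/-- The relation 𝓛̃. -/
def LTilde (a b : T) : Prop := ∀ ε : T, ε * ε = ε → (a * ε = a ↔ b * ε = b)

/-- `blockProd p i k = p i * p (i+1) * ⋯ * p (i+k)`. -/
def blockProd (p : ℕ → T) (i : ℕ) : ℕ → T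
  | 0 => p i
  | k + 1 => blockProd p i k * p (i + (k + 1))

/-- Multiply `x` by optional (possibly empty) words on both sides. -/
def withCtx (u : Option T) (x : T) (v : Option T) : T :=
  match u, v with
  | none, none => x
  | some u', none => u' * x
  | none, some v' => x * v'
  | some u', some v' => u' * x * v'

/-- Multiply by an optional word on the left. -/
def leftCtx (u : Option T) (x : T) : T := match u with | none => x | some u' => u' * x

/-- Multiply by an optional word on the right. -/
def rightCtx (x : T) (v : Option T) : T := match v with | none => x | some v' => x * v'

end Green

section IGdef

/-- The set of idempotents of `S`. -/
abbrev IdemE (S : Type*) [Semigroup S] : Type _ := {x : S // x * x = x}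

variable {S : Type*} [Semigroup S]

/-- `e, f` form a basic pair if `{e,f} ∩ {ef,fe} ≠ ∅`. -/
def BasicPair (e f : IdemE S) : Prop :=
  (e : S) * f = e ∨ (e : S) * f = f ∨ (f : S) * e = e ∨ (f : S) * e = f

/-- The defining relations of IG(E): `ef = g` whenever `e, f` is a basic pair with
product `g` in `S`. -/
def igRelBase (u v : FreeSemigroup (IdemE S)) : Prop :=
  ∃ e f g : IdemE S, BasicPair e f ∧ (g : S) = (e : S) * (f : S) ∧
    u = FreeSemigroup.of e * FreeSemigroup.of f ∧ v = FreeSemigroup.of g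

/-- The congruence on the free semigroup `E⁺` generated by the defining relations. -/
def igCon (S : Type*) [Semigroup S] : Con (FreeSemigroup (IdemE S)) :=
  conGen (fun u v => igRelBase u v)

/-- The free idempotent generated semigroup IG(E). -/
abbrev IG (S : Type*) [Semigroup S] := (igCon S).Quotient

/-- `w̄`, the image of a word `w ∈ E⁺` in IG(E). -/
def igBar (w : FreeSemigroup (IdemE S)) : IG S := (w : (igCon S).Quotient)

/-- The list of letters of a word. -/
def wordList (w : FreeSemigroup (IdemE S)) : List (IdemE S) := w.head :: w.tail

/-- The length of a word. -/
def wlen (w : FreeSemigroup (IdemE S)) : ℕ := (wordList w).length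

/-- Length of an optional word. -/
def olen (u : Option (FreeSemigroup (IdemE S))) : ℕ :=
  match u with | none => 0 | some u' => wlen u'

/-- `p 1, …, p m` is an r-factorisation of `w`: each factor represents a regular
element of IG(E). -/
def IsRFact (w : FreeSemigroup (IdemE S)) (m : ℕ) (p : ℕ → FreeSemigroup (IdemE S)) : Prop :=
  1 ≤ m ∧ blockProd p 1 (m - 1) = w ∧ ∀ i, 1 ≤ i → i ≤ m → IsRegularElem (igBar (p i))

/-- A minimal r-factorisation: no product of two or more consecutive factors is regular. -/
def IsMinRFact (w : FreeSemigroup (IdemE S)) (m : ℕ) (p : ℕ → FreeSemigroup (IdemE S)) : Prop :=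
  IsRFact w m p ∧
    ∀ i j, 1 ≤ i → i < j → j ≤ m → ¬ IsRegularElem (igBar (blockProd p i (j - i)))

/-- The relation ≈ on m-tuples of words. -/
def TupleApprox (m : ℕ) (p q : ℕ → FreeSemigroup (IdemE S)) : Prop :=
  (∃ i, 1 ≤ i ∧ i ≤ m ∧ igBar (p i) = igBar (q i) ∧
    ∀ j, 1 ≤ j → j ≤ m → j ≠ i → p j = q j) ∨
  (∃ i, ∃ e : IdemE S, 1 ≤ i ∧ i < m ∧
    igBar (p i) = igBar (q i * FreeSemigroup.of e) ∧
    igBar (q (i + 1)) = igBar (FreeSemigroup.of e * p (i + 1)) ∧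
    ∀ j, 1 ≤ j → j ≤ m → j ≠ i → j ≠ i + 1 → p j = q j) ∨
  (∃ i, ∃ e : IdemE S, 1 ≤ i ∧ i < m ∧
    igBar (q i) = igBar (p i * FreeSemigroup.of e) ∧
    igBar (p (i + 1)) = igBar (FreeSemigroup.of e * q (i + 1)) ∧
    ∀ j, 1 ≤ j → j ≤ m → j ≠ i → j ≠ i + 1 → p j = q j)

/-- The relation ∼: the transitive closure of ≈. -/
def TupleSim (m : ℕ) (p q : ℕ → FreeSemigroup (IdemE S)) : Prop :=
  Relation.TransGen (TupleApprox m) p q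

/-- One application of a defining relation of IG(E) inside a word. -/
def RewriteStep (w w' : FreeSemigroup (IdemE S)) : Prop :=
  ∃ (u v : Option (FreeSemigroup (IdemE S))) (x y : FreeSemigroup (IdemE S)),
    (igRelBase x y ∨ igRelBase y x) ∧ w = withCtx u x v ∧ w' = withCtx u y v

/-- `e` is a seed of `w` at (1-based) position `k`. -/
def SeedAt (w : FreeSemigroup (IdemE S)) (e : IdemE S) (k : ℕ) : Prop :=
  ∃ u v : Option (FreeSemigroup (IdemE S)),
    w = withCtx u (FreeSemigroup.of e) v ∧ k = olen u + 1 ∧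
    GreenL (igBar (leftCtx u (FreeSemigroup.of e))) (igBar (FreeSemigroup.of e)) ∧
    GreenR (igBar (FreeSemigroup.of e)) (igBar (rightCtx (FreeSemigroup.of e) v))

/-- The coordinate (position within `w` of the first letter) of the `i`-th factor. -/
def wcoord (p : ℕ → FreeSemigroup (IdemE S)) (i : ℕ) : ℕ :=
  1 + ∑ j ∈ Finset.Ico 1 i, wlen (p j)

end IGdef

/-! ### Auxiliary general semigroup lemmas -/

section GreenAux

variable {T : Type*} [Semigroup T]

lemma grR_refl (a : T) : GreenR a a := Or.inl rfl

lemma grL_refl (a : T) : GreenL a a := Or.inl rfl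

lemma grR_symm {a b : T} (h : GreenR a b) : GreenR b a := by
  rcases h with rfl | ⟨x, y, hx, hy⟩
  · exact Or.inl rfl
  · exact Or.inr ⟨y, x, hy, hx⟩

lemma grL_symm {a b : T} (h : GreenL a b) : GreenL b a := by
  rcases h with rfl | ⟨x, y, hx, hy⟩
  · exact Or.inl rfl
  · exact Or.inr ⟨y, x, hy, hx⟩

lemma grR_trans {a b c : T} (h1 : GreenR a b) (h2 : GreenR b c) : GreenR a c := by
  rcases h1 with rfl | ⟨x, y, hx, hy⟩
  · exact h2
  · rcases h2 with rfl | ⟨s, t, hs, ht⟩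
    · exact Or.inr ⟨x, y, hx, hy⟩
    · exact Or.inr ⟨x * s, t * y, by rw [← mul_assoc, hx, hs], by rw [← mul_assoc, ht, hy]⟩

lemma grL_trans {a b c : T} (h1 : GreenL a b) (h2 : GreenL b c) : GreenL a c := by
  rcases h1 with rfl | ⟨x, y, hx, hy⟩
  · exact h2
  · rcases h2 with rfl | ⟨s, t, hs, ht⟩
    · exact Or.inr ⟨x, y, hx, hy⟩
    · exact Or.inr ⟨s * x, y * t, by rw [mul_assoc, hx, hs], by rw [mul_assoc, ht, hy]⟩

/-- `𝓛 ∘ 𝓡 ⊆ 𝓡 ∘ 𝓛`. -/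
lemma grLR_comm {a b c : T} (h1 : GreenL a b) (h2 : GreenR b c) :
    ∃ d, GreenR a d ∧ GreenL d c := by
  rcases h1 with rfl | ⟨x, y, hx, hy⟩
  · exact ⟨c, h2, grL_refl c⟩
  · rcases h2 with rfl | ⟨s, t, hs, ht⟩
    · exact ⟨a, grR_refl a, Or.inr ⟨x, y, hx, hy⟩⟩
    · refine ⟨a * s, Or.inr ⟨s, t, rfl, ?_⟩, Or.inr ⟨x, y, ?_, ?_⟩⟩
      · -- (a*s)*t = a
        have h3 : a * s = y * (b * s) := by rw [← mul_assoc, hy]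
        rw [h3, hs, mul_assoc, ht, hy]
      · -- x*(a*s) = c
        rw [← mul_assoc, hx, hs]
      · -- y*c = a*s
        rw [← hs, ← mul_assoc, hy]

lemma grD_of_R {a b d : T} (h : GreenR a b) (hd : GreenD b d) : GreenD a d := by
  obtain ⟨c, hc1, hc2⟩ := hd
  exact ⟨c, grR_trans h hc1, hc2⟩

lemma grD_of_L {a b d : T} (h : GreenL a b) (hd : GreenD b d) : GreenD a d := by
  obtain ⟨c, hc1, hc2⟩ := hd
  obtain ⟨n, hn1, hn2⟩ := grLR_comm h hc1
  exact ⟨n, hn1, grL_trans hn2 hc2⟩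

lemma grD_refl (a : T) : GreenD a a := ⟨a, grR_refl a, grL_refl a⟩

/-- regularity transfers along 𝓡 -/
lemma reg_of_R {a c : T} (h : GreenR a c) (ha : IsRegularElem a) : IsRegularElem c := by
  obtain ⟨b, hb⟩ := ha
  rcases h with rfl | ⟨x, y, hx, hy⟩
  · exact ⟨b, hb⟩
  · refine ⟨y * b, ?_⟩
    rw [← hx]
    have h1 : a * x * (y * b) = a * b := by rw [hx, ← mul_assoc, hy]
    rw [h1, ← mul_assoc, hb]

lemma reg_of_L {a c : T} (h : GreenL a c) (ha : IsRegularElem a) : IsRegularElem c := by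
  obtain ⟨b, hb⟩ := ha
  rcases h with rfl | ⟨x, y, hx, hy⟩
  · exact ⟨b, hb⟩
  · refine ⟨b * y, ?_⟩
    rw [← hx]
    have h1 : (b * y) * (x * a) = b * a := by rw [mul_assoc, hx, hy]
    rw [mul_assoc (x*a), h1, mul_assoc x a, ← mul_assoc a b, hb]

/-- helper: from `GreenL a b` and `b*c = c`, get `GreenL (a*c) c`. -/
lemma grL_mul_right {a b c : T} (h : GreenL a b) (hbc : b * c = c) : GreenL (a * c) c := by
  rcases h with rfl | ⟨x, y, hx, hy⟩
  · rw [hbc]; exact grL_refl c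
  · exact Or.inr ⟨x, a, by rw [← mul_assoc, hx, hbc], rfl⟩

/-- helper: from `GreenR b w` and `c*b = c`, get `GreenR c (c*w)`. -/
lemma grR_mul_left {b w c : T} (h : GreenR b w) (hcb : c * b = c) : GreenR c (c * w) := by
  rcases h with rfl | ⟨x, y, hx, hy⟩
  · rw [hcb]; exact grR_refl c
  · exact Or.inr ⟨w, y, rfl, by rw [mul_assoc, hy, hcb]⟩

/-- peel a left factor inside a `GreenL` (used in the final extraction). -/
lemma grL_peel {c y z : T} (h : GreenL ((c * y) * z) z) : GreenL (y * z) z := by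
  rcases h with heq | ⟨x, t, hx, ht⟩
  · exact Or.inr ⟨c, y, by rw [← mul_assoc, heq], rfl⟩
  · exact Or.inr ⟨x * c, y, by rw [mul_assoc x c, ← mul_assoc c, hx], rfl⟩

/-- peel a right factor inside a `GreenR` (used in the final extraction). -/
lemma grR_peel {c y z : T} (h : GreenR z (z * (y * c))) : GreenR z (z * y) := by
  rcases h with heq | ⟨x, t, hx, ht⟩
  · exact Or.inr ⟨y, c, rfl, by rw [mul_assoc, ← heq]⟩
  · exact Or.inr ⟨y, c * t, rfl, by rw [mul_assoc z y, ← mul_assoc y, ← mul_assoc, ht]⟩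

/-! principal ideal lemmas -/

lemma PI_self (a : T) : a ∈ principalIdeal a := Or.inl rfl

lemma PI_mul_left {x a : T} (z : T) (h : x ∈ principalIdeal a) : z * x ∈ principalIdeal a := by
  rcases h with rfl | ⟨u, rfl⟩ | ⟨v, rfl⟩ | ⟨u, v, rfl⟩
  · exact Or.inr (Or.inl ⟨z, rfl⟩)
  · exact Or.inr (Or.inl ⟨z * u, by rw [mul_assoc]⟩)
  · exact Or.inr (Or.inr (Or.inr ⟨z, v, by rw [mul_assoc]⟩))
  · exact Or.inr (Or.inr (Or.inr ⟨z * u, v, by rw [mul_assoc z u a, mul_assoc]⟩))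

lemma PI_mul_right {x a : T} (z : T) (h : x ∈ principalIdeal a) : x * z ∈ principalIdeal a := by
  rcases h with rfl | ⟨u, rfl⟩ | ⟨v, rfl⟩ | ⟨u, v, rfl⟩
  · exact Or.inr (Or.inr (Or.inl ⟨z, rfl⟩))
  · exact Or.inr (Or.inr (Or.inr ⟨u, z, rfl⟩))
  · exact Or.inr (Or.inr (Or.inl ⟨v * z, by rw [← mul_assoc]⟩))
  · exact Or.inr (Or.inr (Or.inr ⟨u, v * z, by rw [← mul_assoc]⟩))

lemma PI_trans {x a b : T} (h1 : x ∈ principalIdeal a) (h2 : a ∈ principalIdeal b) :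
    x ∈ principalIdeal b := by
  rcases h1 with rfl | ⟨u, rfl⟩ | ⟨v, rfl⟩ | ⟨u, v, rfl⟩
  · exact h2
  · exact PI_mul_left u h2
  · exact PI_mul_right v h2
  · exact PI_mul_right v (PI_mul_left u h2)

lemma grR_PI {a b : T} (h : GreenR a b) : a ∈ principalIdeal b := by
  rcases h with rfl | ⟨x, y, hx, hy⟩
  · exact PI_self _
  · exact Or.inr (Or.inr (Or.inl ⟨y, hy⟩))

lemma grL_PI {a b : T} (h : GreenL a b) : a ∈ principalIdeal b := by
  rcases h with rfl | ⟨x, y, hx, hy⟩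
  · exact PI_self _
  · exact Or.inr (Or.inl ⟨y, hy⟩)

lemma grD_PI {a d : T} (h : GreenD a d) : a ∈ principalIdeal d := by
  obtain ⟨c, hc1, hc2⟩ := h
  exact PI_trans (grR_PI hc1) (grL_PI hc2)

lemma PI_map {T' : Type*} [Semigroup T'] (f : T → T') (hf : ∀ x y, f (x * y) = f x * f y)
    {x a : T} (h : x ∈ principalIdeal a) : f x ∈ principalIdeal (f a) := by
  rcases h with rfl | ⟨u, rfl⟩ | ⟨v, rfl⟩ | ⟨u, v, rfl⟩
  · exact PI_self _
  · exact Or.inr (Or.inl ⟨f u, (hf u a).symm⟩)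
  · exact Or.inr (Or.inr (Or.inl ⟨f v, (hf a v).symm⟩))
  · exact Or.inr (Or.inr (Or.inr ⟨f u, f v, by rw [← hf, ← hf]⟩))

end GreenAux
/-! ### Stability in a semigroup with finitely many idempotents -/

section Stab

variable {S : Type*} [Semigroup S]

private lemma mulc {p q r : S} (h : p * q = r) (x : S) : p * (q * x) = r * x := by
  rw [← mul_assoc, h]

/-- `spow x n = x^(n+1)` -/
private def spow (x : S) : ℕ → S
  | 0 => x
  | n + 1 => spow x n * x

private lemma spow_succ (x : S) (n : ℕ) : spow x (n + 1) = spow x n * x := rfl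

private lemma spow_succ' (x : S) (n : ℕ) : spow x (n + 1) = x * spow x n := by
  induction n with
  | zero => rfl
  | succ n ih =>
      calc spow x (n + 2) = (x * spow x n) * x := by rw [← ih]; rfl
        _ = x * (spow x n * x) := mul_assoc _ _ _
        _ = x * spow x (n + 1) := rfl

private lemma spow_add (x : S) (s t : ℕ) : spow x (s + t + 1) = spow x s * spow x t := by
  induction t with
  | zero => rfl
  | succ t ih =>
      have h : s + (t + 1) + 1 = (s + t + 1) + 1 := by omega
      rw [h, spow_succ, ih, spow_succ, mul_assoc]

variable [Finite (IdemE S)]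

/-- In a semigroup with finitely many idempotents, a left inverse (relative to a
local identity `e`) is a right inverse.  -/
lemma directS {e a b : S} (he : e * e = e) (hea : e * a = a) (hae : a * e = a)
    (heb : e * b = b) (hbe : b * e = b) (hba : b * a = e) : a * b = e := by
  have heA : ∀ k, e * spow a k = spow a k := by
    intro k
    induction k with
    | zero => exact hea
    | succ k ih => rw [spow_succ' a k, mulc hea]
  have hAe : ∀ k, spow a k * e = spow a k := by
    intro k
    induction k with
    | zero => exact hae
    | succ k ih => rw [spow_succ a k, mul_assoc, hae]
  have heB : ∀ k, e * spow b k = spow b k := by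
    intro k
    induction k with
    | zero => exact heb
    | succ k ih => rw [spow_succ' b k, mulc heb]
  have hBe : ∀ k, spow b k * e = spow b k := by
    intro k
    induction k with
    | zero => exact hbe
    | succ k ih => rw [spow_succ b k, mul_assoc, hbe]
  have hBA : ∀ k, spow b k * spow a k = e := by
    intro k
    induction k with
    | zero => exact hba
    | succ k ih =>
        rw [spow_succ' b k, spow_succ a k]
        simp only [mul_assoc]
        rw [mulc ih, hea, hba]
  have hgidem : ∀ k, (spow a k * spow b k) * (spow a k * spow b k) = spow a k * spow b k := by
    intro k
    simp only [mul_assoc]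
    rw [mulc (hBA k), heB k]
  have hginj : ∃ k m : ℕ, k < m ∧ spow a k * spow b k = spow a m * spow b m := by
    let G : ℕ → IdemE S := fun k => ⟨spow a k * spow b k, hgidem k⟩
    obtain ⟨k, m, hne, heq⟩ := Finite.exists_ne_map_eq_of_infinite G
    rcases Nat.lt_or_ge k m with h | h
    · exact ⟨k, m, h, congrArg Subtype.val heq⟩
    · have hmk : m < k := by omega
      exact ⟨m, k, hmk, (congrArg Subtype.val heq).symm⟩
  obtain ⟨k, m, hkm, hg⟩ := hginj
  set j := m - k - 1 with hj
  have hm : m = k + j + 1 := by omega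
  have hAm : spow a m = spow a k * spow a j := by rw [hm]; exact spow_add a k j
  have hBm : spow b m = spow b j * spow b k := by
    rw [hm, show k + j + 1 = j + k + 1 by omega]
    exact spow_add b j k
  have hstep : spow a j * spow b j = e := by
    have h1 : spow b k * (spow a k * spow b k) * spow a k = e := by
      simp only [mul_assoc]
      rw [hBA k, hAe k, hBA k]
    have h2 : spow b k * (spow a m * spow b m) * spow a k = spow a j * spow b j := by
      rw [hAm, hBm]
      simp only [mul_assoc]
      rw [hBA k, hBe j, mulc (hBA k), ← mul_assoc e, heA j]
    rw [← h2, ← hg]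
    exact h1
  have hdesc : ∀ n, spow a n * spow b n = e → a * b = e := by
    intro n
    induction n with
    | zero => intro h; exact h
    | succ n ih =>
        intro h
        apply ih
        have h1 : b * (spow a (n+1) * spow b (n+1)) * a = spow a n * spow b n := by
          rw [spow_succ' a n, spow_succ b n]
          simp only [mul_assoc]
          rw [hba, hBe n, mulc hba, ← mul_assoc e, heA n]
        rw [← h1, h, hbe, hba]
  exact hdesc j hstep

/-- Stability: if `e*f = f` and `e ∈ S¹fS¹` then `f*e = e`. -/
lemma stabR {e f : S} (he : e * e = e) (hf : f * f = f) (hef : e * f = f)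
    (hmem : e ∈ principalIdeal f) : f * e = e := by
  rcases hmem with rfl | ⟨u, hu⟩ | ⟨v, hv⟩ | ⟨u, v, huv⟩
  · exact hf
  · have h1 : e * f = e := by rw [← hu, mul_assoc, hf]
    have h2 : f = e := by rw [← hef, h1]
    rw [h2, he]
  · rw [← hv, ← mul_assoc, hf]
  · have huv' : ∀ x, u * (f * (v * x)) = e * x := by
      intro x
      rw [← mul_assoc, ← mul_assoc, huv]
    have heα : e * (f * v * e) = f * v * e := by
      simp only [mul_assoc]; rw [mulc hef]
    have hαe : (f * v * e) * e = f * v * e := by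
      simp only [mul_assoc]; rw [he]
    have heβ : e * (e * u * f * e) = e * u * f * e := by
      simp only [mul_assoc]; rw [mulc he]
    have hβe : (e * u * f * e) * e = e * u * f * e := by
      simp only [mul_assoc]; rw [he]
    have hβα : (e * u * f * e) * (f * v * e) = e := by
      simp only [mul_assoc]
      rw [mulc hef, mulc hf, huv' e, he, he]
    have hαβ : (f * v * e) * (e * u * f * e) = e :=
      directS he heα hαe heβ hβe hβα
    have hfα : f * (f * v * e) = f * v * e := by
      simp only [mul_assoc]; rw [mulc hf]
    rw [← hαβ, ← mul_assoc, hfα]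

/-- Dual stability: if `f*e = f` and `e ∈ S¹fS¹` then `e*f = e`. -/
lemma stabL {e f : S} (he : e * e = e) (hf : f * f = f) (hfe : f * e = f)
    (hmem : e ∈ principalIdeal f) : e * f = e := by
  rcases hmem with rfl | ⟨u, hu⟩ | ⟨v, hv⟩ | ⟨u, v, huv⟩
  · exact hf
  · rw [← hu, mul_assoc, hf]
  · have h1 : f * e = e := by rw [← hv, ← mul_assoc, hf]
    have h2 : f = e := by rw [← hfe, h1]
    rw [h2, he]
  · have huv' : ∀ x, u * (f * (v * x)) = e * x := by
      intro x
      rw [← mul_assoc, ← mul_assoc, huv]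
    have heα : e * (e * u * f) = e * u * f := by
      simp only [mul_assoc]; rw [mulc he]
    have hαe : (e * u * f) * e = e * u * f := by
      simp only [mul_assoc]; rw [hfe]
    have heβ : e * (e * (f * v) * e) = e * (f * v) * e := by
      simp only [mul_assoc]; rw [mulc he]
    have hβe : (e * (f * v) * e) * e = e * (f * v) * e := by
      simp only [mul_assoc]; rw [he]
    have hαβ : (e * u * f) * (e * (f * v) * e) = e := by
      simp only [mul_assoc]
      rw [mulc hfe, mulc hf, huv' e, he, he]
    have hβα : (e * (f * v) * e) * (e * u * f) = e :=
      directS he heβ hβe heα hαe hαβ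
    have hαf : (e * u * f) * f = e * u * f := by
      simp only [mul_assoc]; rw [hf]
    rw [← hβα, mul_assoc, hαf]

end Stab
/-! ### Basic facts about IG(E) -/

section IGBasic

variable {S : Type*} [Semigroup S]

/-- the class of a single letter -/
def igOf (e : IdemE S) : IG S := igBar (FreeSemigroup.of e)

lemma igBar_mul (x y : FreeSemigroup (IdemE S)) : igBar (x * y) = igBar x * igBar y := rfl

lemma igBar_eq_of_con {x y : FreeSemigroup (IdemE S)} (h : igCon S x y) : igBar x = igBar y :=
  (Con.eq _).2 h

/-- the defining relations, at the level of `igOf` -/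
lemma igRel_basic {e f g : IdemE S} (hb : BasicPair e f) (hg : (g : S) = (e : S) * f) :
    igOf e * igOf f = igOf g := by
  have : igCon S (FreeSemigroup.of e * FreeSemigroup.of f) (FreeSemigroup.of g) :=
    ConGen.Rel.of _ _ ⟨e, f, g, hb, hg, rfl, rfl⟩
  exact igBar_eq_of_con this

lemma igOf_idem (e : IdemE S) : igOf e * igOf e = igOf e :=
  igRel_basic (Or.inl e.prop) e.prop.symm

/-- the canonical homomorphism `IG(E) → S` -/
noncomputable def phiW : FreeSemigroup (IdemE S) →ₙ* S :=
  FreeSemigroup.lift (fun e => (e : S))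

lemma phiW_resp : ∀ a b : FreeSemigroup (IdemE S), igCon S a b → phiW a = phiW b := by
  intro a b h
  induction h with
  | of x y hxy =>
      obtain ⟨e, f, g, hb, hg, rfl, rfl⟩ := hxy
      simp [phiW, hg]
  | refl => rfl
  | symm _ ih => exact ih.symm
  | trans _ _ ih1 ih2 => exact ih1.trans ih2
  | mul _ _ ih1 ih2 => simp [map_mul, ih1, ih2]

noncomputable def phiB : IG S → S := Quotient.lift (phiW (S := S)) phiW_resp

lemma phiB_igBar (w : FreeSemigroup (IdemE S)) : phiB (igBar w) = phiW w := rfl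

lemma phiB_mul (x y : IG S) : phiB (x * y) = phiB x * phiB y := by
  induction x using Quotient.ind
  induction y using Quotient.ind
  exact map_mul phiW _ _

lemma phiB_igOf (e : IdemE S) : phiB (igOf e) = (e : S) := by
  simp [igOf, phiB_igBar, phiW]

lemma igBar_surj (z : IG S) : ∃ w : FreeSemigroup (IdemE S), igBar w = z :=
  Quot.exists_rep z

end IGBasic
/-! ### Words as lists and single rewriting steps -/

section Lists

variable {S : Type*} [Semigroup S]

/-- multiply the product of the list `l` on the left of `x` -/
def lmulP (l : List (IdemE S)) (x : IG S) : IG S := l.foldr (fun a b => igOf a * b) x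

/-- multiply the product of the list `l` on the right of `x` -/
def rmulP (x : IG S) (l : List (IdemE S)) : IG S := l.foldl (fun b a => b * igOf a) x

@[simp] lemma lmulP_nil (x : IG S) : lmulP [] x = x := rfl

@[simp] lemma lmulP_cons (a : IdemE S) (l : List (IdemE S)) (x : IG S) :
    lmulP (a :: l) x = igOf a * lmulP l x := rfl

@[simp] lemma rmulP_nil (x : IG S) : rmulP x [] = x := rfl

@[simp] lemma rmulP_cons (x : IG S) (a : IdemE S) (l : List (IdemE S)) :
    rmulP x (a :: l) = rmulP (x * igOf a) l := rfl

lemma lmulP_append (l m : List (IdemE S)) (x : IG S) :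
    lmulP (l ++ m) x = lmulP l (lmulP m x) := by
  simp [lmulP, List.foldr_append]

lemma rmulP_append (x : IG S) (l m : List (IdemE S)) :
    rmulP x (l ++ m) = rmulP (rmulP x l) m := by
  simp [rmulP, List.foldl_append]

lemma lmulP_mul (l : List (IdemE S)) (x y : IG S) :
    lmulP l (x * y) = lmulP l x * y := by
  induction l with
  | nil => rfl
  | cons a l ih => simp only [lmulP_cons, ih, mul_assoc]

lemma rmulP_mul (x y : IG S) (l : List (IdemE S)) :
    rmulP (x * y) l = x * rmulP y l := by
  induction l generalizing y with
  | nil => rfl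
  | cons a l ih => simp only [rmulP_cons, mul_assoc, ih]

/-- the element represented by a nonempty list -/
def lprod : List (IdemE S) → Option (IG S)
  | [] => none
  | a :: l => some (rmulP (igOf a) l)

lemma rmulP_split (x : IG S) (l₁ : List (IdemE S)) (f : IdemE S) (l₂ : List (IdemE S)) :
    rmulP x (l₁ ++ f :: l₂) = x * lmulP l₁ (rmulP (igOf f) l₂) := by
  induction l₁ generalizing x with
  | nil => simp [rmulP_mul]
  | cons b l ih =>
      simp only [List.cons_append, rmulP_cons, lmulP_cons]
      rw [ih, ← mul_assoc]

lemma lprod_split (l₁ : List (IdemE S)) (f : IdemE S) (l₂ : List (IdemE S)) :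
    lprod (l₁ ++ f :: l₂) = some (lmulP l₁ (rmulP (igOf f) l₂)) := by
  cases l₁ with
  | nil => rfl
  | cons a l => simp [lprod, rmulP_split, lmulP_cons]

end Lists
/-! ### single rewriting steps on lists, and the chain lemma -/

section Steps

variable {S : Type*} [Semigroup S]

/-- One application of a defining relation, on lists of letters. -/
def LStep (L L' : List (IdemE S)) : Prop :=
  ∃ (l₁ l₂ : List (IdemE S)) (p q r : IdemE S), BasicPair p q ∧ (r : S) = (p : S) * q ∧
    ((L = l₁ ++ p :: q :: l₂ ∧ L' = l₁ ++ r :: l₂) ∨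
     (L = l₁ ++ r :: l₂ ∧ L' = l₁ ++ p :: q :: l₂))

lemma LStep_symm : Symmetric (LStep (S := S)) := by
  rintro L L' ⟨l₁, l₂, p, q, r, hb, hr, h | h⟩
  · exact ⟨l₁, l₂, p, q, r, hb, hr, Or.inr ⟨h.2, h.1⟩⟩
  · exact ⟨l₁, l₂, p, q, r, hb, hr, Or.inl ⟨h.2, h.1⟩⟩

lemma LStep_lprod {L L' : List (IdemE S)} (h : LStep L L') : lprod L = lprod L' := by
  obtain ⟨l₁, l₂, p, q, r, hb, hr, h | h⟩ := h <;> rw [h.1, h.2] <;>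
  · have hpq : igOf p * igOf q = igOf r := igRel_basic hb hr
    rw [show (p :: q :: l₂ : List (IdemE S)) = [p] ++ q :: l₂ by rfl, ← List.append_assoc]
    rw [lprod_split, lprod_split]
    congr 1
    rw [lmulP_append]
    simp only [lmulP_cons, lmulP_nil]
    rw [← rmulP_mul, hpq]

lemma LStep_append_left {L L' : List (IdemE S)} (B : List (IdemE S)) (h : LStep L L') :
    LStep (L ++ B) (L' ++ B) := by
  obtain ⟨l₁, l₂, p, q, r, hb, hr, h | h⟩ := h
  · exact ⟨l₁, l₂ ++ B, p, q, r, hb, hr, Or.inl ⟨by rw [h.1]; simp, by rw [h.2]; simp⟩⟩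
  · exact ⟨l₁, l₂ ++ B, p, q, r, hb, hr, Or.inr ⟨by rw [h.1]; simp, by rw [h.2]; simp⟩⟩

lemma LStep_append_right {L L' : List (IdemE S)} (A : List (IdemE S)) (h : LStep L L') :
    LStep (A ++ L) (A ++ L') := by
  obtain ⟨l₁, l₂, p, q, r, hb, hr, h | h⟩ := h
  · exact ⟨A ++ l₁, l₂, p, q, r, hb, hr, Or.inl ⟨by rw [h.1]; simp, by rw [h.2]; simp⟩⟩
  · exact ⟨A ++ l₁, l₂, p, q, r, hb, hr, Or.inr ⟨by rw [h.1]; simp, by rw [h.2]; simp⟩⟩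

/-- chains of rewriting steps -/
abbrev LChain (L L' : List (IdemE S)) : Prop := Relation.ReflTransGen LStep L L'

lemma LChain_append_left {L L' : List (IdemE S)} (B : List (IdemE S)) (h : LChain L L') :
    LChain (L ++ B) (L' ++ B) := by
  induction h with
  | refl => exact Relation.ReflTransGen.refl
  | tail _ h2 ih => exact ih.tail (LStep_append_left B h2)

lemma LChain_append_right {L L' : List (IdemE S)} (A : List (IdemE S)) (h : LChain L L') :
    LChain (A ++ L) (A ++ L') := by
  induction h with
  | refl => exact Relation.ReflTransGen.refl
  | tail _ h2 ih => exact ih.tail (LStep_append_right A h2)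

lemma wordList_mul (x y : FreeSemigroup (IdemE S)) :
    wordList (x * y) = wordList x ++ wordList y := by
  simp [wordList]

lemma wordList_of (e : IdemE S) : wordList (FreeSemigroup.of e) = [e] := rfl

/-- the congruence is generated by single steps -/
lemma chain_of_con {w w' : FreeSemigroup (IdemE S)} (h : igCon S w w') :
    LChain (wordList w) (wordList w') := by
  let c : Con (FreeSemigroup (IdemE S)) :=
    { r := fun a b => LChain (wordList a) (wordList b)
      iseqv := ⟨fun _ => Relation.ReflTransGen.refl,
        fun h => letI : Std.Symm (LStep (S := S)) := ⟨fun _ _ h' => LStep_symm h'⟩; Std.Symm.symm _ _ h,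
        fun h1 h2 => h1.trans h2⟩
      mul' := by
        intro a b a' b' h1 h2
        show LChain (wordList (a * a')) (wordList (b * b'))
        rw [wordList_mul, wordList_mul]
        exact (LChain_append_left _ h1).trans (LChain_append_right _ h2) }
  have hle : igCon S ≤ c := by
    apply Con.conGen_le.2
    rintro x y ⟨e, f, g, hb, hg, rfl, rfl⟩
    refine Relation.ReflTransGen.single ?_
    refine ⟨[], [], e, f, g, hb, hg, Or.inl ⟨?_, ?_⟩⟩
    · rw [wordList_mul]; rfl
    · rfl
  exact hle h

lemma wordList_of_mul (x : IdemE S) (y : FreeSemigroup (IdemE S)) :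
    wordList (FreeSemigroup.of x * y) = x :: wordList y := by
  rw [wordList_mul]; rfl

lemma rmulP_wordList (w : FreeSemigroup (IdemE S)) : ∀ z : IG S,
    rmulP z (wordList w) = z * igBar w := by
  induction w with
  | ih1 x => intro z; rfl
  | ih2 x y ihx ihy =>
      intro z
      rw [wordList_of_mul, rmulP_cons, ihy, igBar_mul, mul_assoc]
      rfl

lemma lmulP_wordList (w : FreeSemigroup (IdemE S)) : ∀ z : IG S,
    lmulP (wordList w) z = igBar w * z := by
  induction w with
  | ih1 x => intro z; rfl
  | ih2 x y ihx ihy =>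
      intro z
      rw [wordList_of_mul, lmulP_cons, ihy, igBar_mul, mul_assoc]
      rfl

lemma lprod_wordList (w : FreeSemigroup (IdemE S)) : lprod (wordList w) = some (igBar w) := by
  induction w with
  | ih1 x => rfl
  | ih2 x y ihx ihy =>
      rw [wordList_of_mul]
      simp only [lprod]
      rw [rmulP_wordList, igBar_mul]
      rfl

end Steps
/-! ### the seed invariant and its preservation -/

section Super

variable {S : Type*} [Semigroup S]

/-- splitting of an occurrence against a distinguished position -/
lemma occ_split {α : Type*} {l₁ : List α} {l₂ m₂ : List α} {r f : α} :
    ∀ m₁ : List α, l₁ ++ r :: l₂ = m₁ ++ f :: m₂ →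
    (∃ k, l₁ = m₁ ++ f :: k ∧ m₂ = k ++ r :: l₂) ∨
    (l₁ = m₁ ∧ r = f ∧ l₂ = m₂) ∨
    (∃ k, m₁ = l₁ ++ r :: k ∧ l₂ = k ++ f :: m₂) := by
  induction l₁ with
  | nil =>
      intro m₁ h
      cases m₁ with
      | nil =>
          injection h with h1 h2
          exact Or.inr (Or.inl ⟨rfl, h1, h2⟩)
      | cons y k =>
          injection h with h1 h2
          refine Or.inr (Or.inr ⟨k, ?_, h2⟩)
          rw [h1, List.nil_append]
  | cons a l₁ ih =>
      intro m₁ h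
      cases m₁ with
      | nil =>
          injection h with h1 h2
          refine Or.inl ⟨l₁, ?_, h2.symm⟩
          rw [← h1, List.nil_append]
      | cons y m₁' =>
          injection h with h1 h2
          rcases ih m₁' h2 with ⟨k, hk1, hk2⟩ | ⟨hm, hfr, hmm⟩ | ⟨k, hk1, hk2⟩
          · refine Or.inl ⟨k, ?_, hk2⟩
            rw [hk1, h1, List.cons_append]
          · refine Or.inr (Or.inl ⟨?_, hfr, hmm⟩)
            rw [hm, h1]
          · refine Or.inr (Or.inr ⟨k, ?_, hk2⟩)
            rw [hk1, h1, List.cons_append]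

lemma lmulP_cases (l : List (IdemE S)) (x : IG S) :
    lmulP l x = x ∨ ∃ c, lmulP l x = c * x := by
  induction l with
  | nil => exact Or.inl rfl
  | cons a l ih =>
      rcases ih with h | ⟨c, hc⟩
      · exact Or.inr ⟨igOf a, by rw [lmulP_cons, h]⟩
      · exact Or.inr ⟨igOf a * c, by rw [lmulP_cons, hc, mul_assoc]⟩

lemma rmulP_cases (x : IG S) (l : List (IdemE S)) :
    rmulP x l = x ∨ ∃ c, rmulP x l = x * c := by
  induction l generalizing x with
  | nil => exact Or.inl rfl
  | cons a l ih =>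
      rcases ih (x * igOf a) with h | ⟨c, hc⟩
      · exact Or.inr ⟨igOf a, by rw [rmulP_cons, h]⟩
      · exact Or.inr ⟨igOf a * c, by rw [rmulP_cons, hc, mul_assoc]⟩

lemma lprod_mem_PI {d : IG S} {l₁ l₂ : List (IdemE S)} {f : IdemE S}
    (hd : lprod (l₁ ++ f :: l₂) = some d) : d ∈ principalIdeal (igOf f) := by
  rw [lprod_split] at hd
  have hdd : d = lmulP l₁ (rmulP (igOf f) l₂) := (Option.some_inj.1 hd).symm
  rcases rmulP_cases (igOf f) l₂ with h2 | ⟨c2, h2⟩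
  · rw [h2] at hdd
    rcases lmulP_cases l₁ (igOf f) with h1 | ⟨c1, h1⟩
    · rw [h1] at hdd; rw [hdd]; exact PI_self _
    · rw [h1] at hdd; rw [hdd]; exact PI_mul_left c1 (PI_self _)
  · rw [h2] at hdd
    rcases lmulP_cases l₁ (igOf f * c2) with h1 | ⟨c1, h1⟩
    · rw [h1] at hdd; rw [hdd]; exact PI_mul_right c2 (PI_self _)
    · rw [h1] at hdd; rw [hdd]; exact PI_mul_left c1 (PI_mul_right c2 (PI_self _))

lemma rmulP_collapse {p q r : IdemE S} (hpqr : igOf p * igOf q = igOf r)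
    (x : IG S) (k l₂ : List (IdemE S)) :
    rmulP x (k ++ p :: q :: l₂) = rmulP x (k ++ r :: l₂) := by
  rw [rmulP_append, rmulP_append]
  simp only [rmulP_cons]
  rw [mul_assoc, hpqr]

lemma lmulP_collapse {p q r : IdemE S} (hpqr : igOf p * igOf q = igOf r)
    (x : IG S) (k l₁ : List (IdemE S)) :
    lmulP (l₁ ++ p :: q :: k) x = lmulP (l₁ ++ r :: k) x := by
  rw [lmulP_append, lmulP_append]
  simp only [lmulP_cons]
  rw [← mul_assoc, hpqr]

/-- The invariant: every occurrence of a letter `𝓓`-related to `d` is a seed. -/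
def Superl (d : IG S) (L : List (IdemE S)) : Prop :=
  ∀ l₁ f l₂, L = l₁ ++ f :: l₂ → GreenD (igOf f) d →
    GreenL (lmulP l₁ (igOf f)) (igOf f) ∧ GreenR (igOf f) (rmulP (igOf f) l₂)

end Super
section SuperMain

variable {S : Type*} [Semigroup S]

/-- merging `p q` into `r` preserves the seed invariant -/
lemma superl_merge {d : IG S} {l₁ l₂ : List (IdemE S)} {p q r : IdemE S}
    (hb : BasicPair p q) (hr : (r : S) = (p : S) * q)
    (hs : Superl d (l₁ ++ p :: q :: l₂)) : Superl d (l₁ ++ r :: l₂) := by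
  have hpqr : igOf p * igOf q = igOf r := igRel_basic hb hr
  intro m₁ f m₂ hocc hD
  rcases occ_split m₁ hocc with ⟨k, hk1, hk2⟩ | ⟨hm1, hfr, hm2⟩ | ⟨k, hk1, hk2⟩
  · -- occurrence inside l₁
    have ho : l₁ ++ p :: q :: l₂ = m₁ ++ f :: (k ++ p :: q :: l₂) := by
      rw [hk1]; simp
    obtain ⟨hL, hR⟩ := hs _ _ _ ho hD
    refine ⟨hL, ?_⟩
    rw [hk2, ← rmulP_collapse hpqr]
    exact hR
  · -- occurrence at the rewritten position
    subst hm1; subst hm2; subst hfr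
    rcases hb with hb1 | hb2 | hb3 | hb4
    · -- p*q = p, so r = p
      have hrp : p = r := Subtype.ext (hr.trans hb1).symm
      subst hrp
      obtain ⟨hL, hR⟩ := hs l₁ p (q :: l₂) rfl hD
      refine ⟨hL, ?_⟩
      rw [rmulP_cons, hpqr] at hR
      exact hR
    · -- p*q = q, so r = q
      have hrq : q = r := Subtype.ext (hr.trans hb2).symm
      subst hrq
      have ho : l₁ ++ p :: q :: l₂ = (l₁ ++ [p]) ++ q :: l₂ := by simp
      obtain ⟨hL, hR⟩ := hs (l₁ ++ [p]) q l₂ ho hD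
      refine ⟨?_, hR⟩
      have heq : lmulP (l₁ ++ [p]) (igOf q) = lmulP l₁ (igOf q) := by
        rw [lmulP_append, lmulP_cons, lmulP_nil, hpqr]
      rw [← heq]
      exact hL
    · -- q*p = p : here r is a new letter with p 𝓡 r
      have hv_pr : (p : S) * r = r := by rw [hr, ← mul_assoc, p.prop]
      have hv_rp : (r : S) * p = p := by rw [hr, mul_assoc, hb3, p.prop]
      have hpr : igOf p * igOf r = igOf r :=
        igRel_basic (Or.inr (Or.inl hv_pr)) hv_pr.symm
      have hrp : igOf r * igOf p = igOf p :=
        igRel_basic (Or.inr (Or.inl hv_rp)) hv_rp.symm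
      have hRpr : GreenR (igOf p) (igOf r) := Or.inr ⟨igOf r, igOf p, hpr, hrp⟩
      have hDp : GreenD (igOf p) d := grD_of_R hRpr hD
      obtain ⟨hL, hR⟩ := hs l₁ p (q :: l₂) rfl hDp
      constructor
      · have heq : lmulP l₁ (igOf r) = lmulP l₁ (igOf p) * igOf r := by
          rw [← lmulP_mul, hpr]
        rw [heq]
        exact grL_mul_right hL hpr
      · rw [rmulP_cons, hpqr] at hR
        exact grR_trans (grR_symm hRpr) hR
    · -- q*p = q : here r is a new letter with r 𝓛 q
      have hv_qr : (q : S) * r = q := by rw [hr, ← mul_assoc, hb4, q.prop]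
      have hv_rq : (r : S) * q = r := by rw [hr, mul_assoc, q.prop]
      have hqr : igOf q * igOf r = igOf q := igRel_basic (Or.inl hv_qr) hv_qr.symm
      have hrq : igOf r * igOf q = igOf r := igRel_basic (Or.inl hv_rq) hv_rq.symm
      have hLrq : GreenL (igOf r) (igOf q) := Or.inr ⟨igOf q, igOf r, hqr, hrq⟩
      have hDq : GreenD (igOf q) d := grD_of_L (grL_symm hLrq) hD
      have ho : l₁ ++ p :: q :: l₂ = (l₁ ++ [p]) ++ q :: l₂ := by simp
      obtain ⟨hL, hR⟩ := hs (l₁ ++ [p]) q l₂ ho hDq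
      constructor
      · have heq : lmulP (l₁ ++ [p]) (igOf q) = lmulP l₁ (igOf r) := by
          rw [lmulP_append, lmulP_cons, lmulP_nil, hpqr]
        rw [heq] at hL
        exact grL_trans hL (grL_symm hLrq)
      · have h1 := grR_mul_left hR hrq
        rw [← rmulP_mul, hrq] at h1
        exact h1
  · -- occurrence inside l₂
    have ho : l₁ ++ p :: q :: l₂ = (l₁ ++ p :: q :: k) ++ f :: m₂ := by
      rw [hk2]; simp
    obtain ⟨hL, hR⟩ := hs _ _ _ ho hD
    refine ⟨?_, hR⟩
    rw [hk1, ← lmulP_collapse hpqr]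
    exact hL

end SuperMain
section SuperExpand

variable {S : Type*} [Semigroup S] [Finite (IdemE S)]

/-- expanding `r` into `p q` preserves the seed invariant -/
lemma superl_expand {d : IG S} {l₁ l₂ : List (IdemE S)} {p q r : IdemE S}
    (hb : BasicPair p q) (hr : (r : S) = (p : S) * q)
    (hd : lprod (l₁ ++ r :: l₂) = some d)
    (hs : Superl d (l₁ ++ r :: l₂)) : Superl d (l₁ ++ p :: q :: l₂) := by
  have hpqr : igOf p * igOf q = igOf r := igRel_basic hb hr
  have hdmem : d ∈ principalIdeal (igOf r) := lprod_mem_PI hd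
  intro m₁ f m₂ hocc hD
  rcases occ_split m₁ hocc with ⟨k, hk1, hk2⟩ | ⟨hm1, hpf, hm2⟩ | ⟨k, hk1, hk2⟩
  · -- occurrence inside l₁
    have ho : l₁ ++ r :: l₂ = m₁ ++ f :: (k ++ r :: l₂) := by
      rw [hk1]; simp
    obtain ⟨hL, hR⟩ := hs _ _ _ ho hD
    refine ⟨hL, ?_⟩
    rw [hk2, rmulP_collapse hpqr]
    exact hR
  · -- occurrence at position of p
    subst hm1; subst hm2; subst hpf
    have hmemS : (p : S) ∈ principalIdeal (r : S) := by
      have h1 : igOf p ∈ principalIdeal d := grD_PI hD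
      have h2 := PI_map phiB phiB_mul (PI_trans h1 hdmem)
      rwa [phiB_igOf, phiB_igOf] at h2
    rcases hb with hb1 | hb2 | hb3 | hb4
    · -- p*q = p, so r = p
      have hrp : p = r := Subtype.ext (hr.trans hb1).symm
      subst hrp
      obtain ⟨hL, hR⟩ := hs l₁ p l₂ rfl hD
      refine ⟨hL, ?_⟩
      rw [rmulP_cons, hpqr]
      exact hR
    · -- p*q = q, so r = q : stability gives q*p = p
      have hrq : q = r := Subtype.ext (hr.trans hb2).symm
      subst hrq
      have hstab : (q : S) * p = p := stabR p.prop q.prop hb2 hmemS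
      have hqp : igOf q * igOf p = igOf p :=
        igRel_basic (Or.inr (Or.inl hstab)) hstab.symm
      have hRpq : GreenR (igOf p) (igOf q) := Or.inr ⟨igOf q, igOf p, hpqr, hqp⟩
      have hDq : GreenD (igOf q) d := grD_of_R (grR_symm hRpq) hD
      obtain ⟨hL, hR⟩ := hs l₁ q l₂ rfl hDq
      constructor
      · have heq : lmulP l₁ (igOf p) = lmulP l₁ (igOf q) * igOf p := by
          rw [← lmulP_mul, hqp]
        rw [heq]
        exact grL_mul_right hL hqp
      · rw [rmulP_cons, hpqr]
        exact grR_trans hRpq hR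
    · -- q*p = p : r is a new letter with p 𝓡 r
      have hv_pr : (p : S) * r = r := by rw [hr, ← mul_assoc, p.prop]
      have hv_rp : (r : S) * p = p := by rw [hr, mul_assoc, hb3, p.prop]
      have hpr : igOf p * igOf r = igOf r :=
        igRel_basic (Or.inr (Or.inl hv_pr)) hv_pr.symm
      have hrp : igOf r * igOf p = igOf p :=
        igRel_basic (Or.inr (Or.inl hv_rp)) hv_rp.symm
      have hRpr : GreenR (igOf p) (igOf r) := Or.inr ⟨igOf r, igOf p, hpr, hrp⟩
      have hDr : GreenD (igOf r) d := grD_of_R (grR_symm hRpr) hD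
      obtain ⟨hL, hR⟩ := hs l₁ r l₂ rfl hDr
      constructor
      · have heq : lmulP l₁ (igOf p) = lmulP l₁ (igOf r) * igOf p := by
          rw [← lmulP_mul, hrp]
        rw [heq]
        exact grL_mul_right hL hrp
      · rw [rmulP_cons, hpqr]
        exact grR_trans hRpr hR
    · -- q*p = q : stability forces r = p
      have hv_pr : (p : S) * r = r := by rw [hr, ← mul_assoc, p.prop]
      have hv_rp : (r : S) * p = r := by rw [hr, mul_assoc, hb4]
      have hstab : (r : S) * p = p := stabR p.prop r.prop hv_pr hmemS
      have hrf : r = p := Subtype.ext (hv_rp.symm.trans hstab)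
      subst hrf
      obtain ⟨hL, hR⟩ := hs l₁ r l₂ rfl hD
      refine ⟨hL, ?_⟩
      rw [rmulP_cons, hpqr]
      exact hR
  · -- occurrence at position of q or inside l₂
    cases k with
    | nil =>
        -- occurrence at position of q
        injection hk2 with hq1 hq2
        subst hq1; subst hq2; subst hk1
        have hmemS : (q : S) ∈ principalIdeal (r : S) := by
          have h1 : igOf q ∈ principalIdeal d := grD_PI hD
          have h2 := PI_map phiB phiB_mul (PI_trans h1 hdmem)
          rwa [phiB_igOf, phiB_igOf] at h2
        rcases hb with hb1 | hb2 | hb3 | hb4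
        · -- p*q = p, so r = p : stability gives q*p = q
          have hrp : p = r := Subtype.ext (hr.trans hb1).symm
          subst hrp
          have hstab : (q : S) * p = q := stabL q.prop p.prop hb1 hmemS
          have hqp : igOf q * igOf p = igOf q :=
            igRel_basic (Or.inl hstab) hstab.symm
          have hLqp : GreenL (igOf q) (igOf p) := Or.inr ⟨igOf p, igOf q, hpqr, hqp⟩
          have hDp : GreenD (igOf p) d := grD_of_L (grL_symm hLqp) hD
          obtain ⟨hL, hR⟩ := hs l₁ p l₂ rfl hDp
          constructor
          · have heq : lmulP (l₁ ++ [p]) (igOf q) = lmulP l₁ (igOf p) := by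
              rw [lmulP_append, lmulP_cons, lmulP_nil, hpqr]
            rw [heq]
            exact grL_trans hL (grL_symm hLqp)
          · have h1 := grR_mul_left hR hqp
            rw [← rmulP_mul, hqp] at h1
            exact h1
        · -- p*q = q, so r = q
          have hrq : q = r := Subtype.ext (hr.trans hb2).symm
          subst hrq
          obtain ⟨hL, hR⟩ := hs l₁ q l₂ rfl hD
          refine ⟨?_, hR⟩
          have heq : lmulP (l₁ ++ [p]) (igOf q) = lmulP l₁ (igOf q) := by
            rw [lmulP_append, lmulP_cons, lmulP_nil, hpqr]
          rw [heq]
          exact hL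
        · -- q*p = p : stability forces r = q
          have hv_rq : (r : S) * q = r := by rw [hr, mul_assoc, q.prop]
          have hv_qr : (q : S) * r = r := by rw [hr, ← mul_assoc, hb3]
          have hstab : (q : S) * r = q := stabL q.prop r.prop hv_rq hmemS
          have hrf : r = q := Subtype.ext (hv_qr.symm.trans hstab)
          subst hrf
          obtain ⟨hL, hR⟩ := hs l₁ r l₂ rfl hD
          refine ⟨?_, hR⟩
          have heq : lmulP (l₁ ++ [p]) (igOf r) = lmulP l₁ (igOf r) := by
            rw [lmulP_append, lmulP_cons, lmulP_nil, hpqr]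
          rw [heq]
          exact hL
        · -- q*p = q : r is a new letter with r 𝓛 q
          have hv_qr : (q : S) * r = q := by rw [hr, ← mul_assoc, hb4, q.prop]
          have hv_rq : (r : S) * q = r := by rw [hr, mul_assoc, q.prop]
          have hqr : igOf q * igOf r = igOf q := igRel_basic (Or.inl hv_qr) hv_qr.symm
          have hrq : igOf r * igOf q = igOf r := igRel_basic (Or.inl hv_rq) hv_rq.symm
          have hLrq : GreenL (igOf r) (igOf q) := Or.inr ⟨igOf q, igOf r, hqr, hrq⟩
          have hDr : GreenD (igOf r) d := grD_of_L hLrq hD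
          obtain ⟨hL, hR⟩ := hs l₁ r l₂ rfl hDr
          constructor
          · have heq : lmulP (l₁ ++ [p]) (igOf q) = lmulP l₁ (igOf r) := by
              rw [lmulP_append, lmulP_cons, lmulP_nil, hpqr]
            rw [heq]
            exact grL_trans hL hLrq
          · have h1 := grR_mul_left hR hqr
            rw [← rmulP_mul, hqr] at h1
            exact h1
    | cons y k' =>
        -- occurrence inside l₂
        injection hk2 with hy1 hy2
        subst hy1
        have ho : l₁ ++ r :: l₂ = (l₁ ++ r :: k') ++ f :: m₂ := by
          rw [hy2]; simp
        obtain ⟨hL, hR⟩ := hs _ _ _ ho hD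
        refine ⟨?_, hR⟩
        rw [hk1, lmulP_collapse hpqr]
        exact hL

end SuperExpand
section FinalPrep

variable {S : Type*} [Semigroup S] [Finite (IdemE S)]

lemma superl_step {d : IG S} {L L' : List (IdemE S)} (h : LStep L L')
    (hd : lprod L = some d) (hs : Superl d L) : Superl d L' := by
  obtain ⟨l₁, l₂, p, q, r, hb, hr, ⟨h1, h2⟩ | ⟨h1, h2⟩⟩ := h
  · subst h1; subst h2; exact superl_merge hb hr hs
  · subst h1; subst h2; exact superl_expand hb hr hd hs

lemma LChain_lprod {L L' : List (IdemE S)} (h : LChain L L') : lprod L = lprod L' := by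
  induction h with
  | refl => rfl
  | tail _ hstep ih => exact ih.trans (LStep_lprod hstep)

lemma superl_chain {d : IG S} {L L' : List (IdemE S)} (h : LChain L L')
    (hd : lprod L = some d) (hs : Superl d L) : Superl d L' := by
  induction h with
  | refl => exact hs
  | tail hc hstep ih => exact superl_step hstep ((LChain_lprod hc).symm.trans hd) ih

lemma superl_single (e : IdemE S) : Superl (igOf e) [e] := by
  intro l₁ f l₂ hocc hD
  cases l₁ with
  | nil =>
      injection hocc with h1 h2
      subst h1
      have h2' : l₂ = [] := h2.symm
      subst h2'
      exact ⟨grL_refl _, grR_refl _⟩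
  | cons a l =>
      injection hocc with h1 h2
      exact absurd h2.symm (by simp)

lemma superl_word {w : FreeSemigroup (IdemE S)} {e : IdemE S} (hw : igBar w = igOf e) :
    Superl (igOf e) (wordList w) := by
  have hcon : igCon S (FreeSemigroup.of e) w := (Con.eq _).1 hw.symm
  have hchain : LChain (wordList (FreeSemigroup.of e)) (wordList w) := chain_of_con hcon
  exact superl_chain hchain rfl (superl_single e)

/-- multiplication of optional elements -/
def oMulO {T : Type*} [Semigroup T] : Option T → Option T → Option T
  | none, b => b
  | some a, none => some a
  | some a, some b => some (a * b)

lemma withCtx_withCtx {T : Type*} [Semigroup T] (A C U V : Option T) (x : T) :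
    withCtx A (withCtx U x V) C = withCtx (oMulO A U) x (oMulO V C) := by
  cases A <;> cases C <;> cases U <;> cases V <;> simp [withCtx, oMulO, mul_assoc]

lemma igBar_withCtx (u v : Option (FreeSemigroup (IdemE S))) (x : FreeSemigroup (IdemE S)) :
    igBar (withCtx u x v) = withCtx (u.map igBar) (igBar x) (v.map igBar) := by
  cases u <;> cases v <;> rfl

/-- letters of an optional word -/
def olist : Option (FreeSemigroup (IdemE S)) → List (IdemE S)
  | none => []
  | some w => wordList w

lemma wordList_withCtx (u v : Option (FreeSemigroup (IdemE S))) (e : IdemE S) :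
    wordList (withCtx u (FreeSemigroup.of e) v) = olist u ++ e :: olist v := by
  cases u <;> cases v <;>
    simp [withCtx, olist, wordList_mul, wordList_of]

lemma lmulP_olist (u : Option (FreeSemigroup (IdemE S))) (z : IG S) :
    lmulP (olist u) z = leftCtx (u.map igBar) z := by
  cases u with
  | none => rfl
  | some w => rw [show olist (some w) = wordList w from rfl, lmulP_wordList]; rfl

lemma rmulP_olist (z : IG S) (v : Option (FreeSemigroup (IdemE S))) :
    rmulP z (olist v) = rightCtx z (v.map igBar) := by
  cases v with
  | none => rfl
  | some w => rw [show olist (some w) = wordList w from rfl, rmulP_wordList]; rfl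

lemma omap_surj (A : Option (IG S)) :
    ∃ ua : Option (FreeSemigroup (IdemE S)), ua.map igBar = A := by
  cases A with
  | none => exact ⟨none, rfl⟩
  | some a =>
      obtain ⟨w, hw⟩ := igBar_surj a
      exact ⟨some w, by simp [hw]⟩

end FinalPrep
theorem stmt16 {S : Type*} [Semigroup S] [Finite (IdemE S)]
    (w : FreeSemigroup (IdemE S)) (u v : Option (FreeSemigroup (IdemE S)))
    (e : IdemE S) (hw : w = withCtx u (FreeSemigroup.of e) v)
    (hD : GreenD (igBar (FreeSemigroup.of e)) (igBar w)) :
    IsRegularElem (igBar w) ∧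
    GreenL (igBar (leftCtx u (FreeSemigroup.of e))) (igBar (FreeSemigroup.of e)) ∧
    GreenR (igBar (FreeSemigroup.of e)) (igBar (rightCtx (FreeSemigroup.of e) v)) := by
  obtain ⟨c, hRc, hLc⟩ := hD
  -- regularity of w̄
  have hereg : IsRegularElem (igBar (FreeSemigroup.of e)) := by
    refine ⟨igBar (FreeSemigroup.of e), ?_⟩
    show igOf e * igOf e * igOf e = igOf e
    rw [igOf_idem, igOf_idem]
  have hwreg : IsRegularElem (igBar w) := reg_of_L hLc (reg_of_R hRc hereg)
  -- master equation : ē = A (w̄) C with optional contexts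
  have master : ∃ A C : Option (IG S), igOf e = withCtx A (igBar w) C := by
    rcases hRc with heq | ⟨x₁, y₁, hx₁, hy₁⟩
    · rcases hLc with heq2 | ⟨x₂, y₂, hx₂, hy₂⟩
      · exact ⟨none, none, heq.trans heq2⟩
      · refine ⟨some y₂, none, ?_⟩
        show igOf e = y₂ * igBar w
        rw [show igOf e = c from heq]; exact hy₂.symm
    · rcases hLc with heq2 | ⟨x₂, y₂, hx₂, hy₂⟩
      · refine ⟨none, some y₁, ?_⟩
        show igOf e = igBar w * y₁
        rw [← heq2]; exact hy₁.symm
      · refine ⟨some y₂, some y₁, ?_⟩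
        show igOf e = y₂ * igBar w * y₁
        rw [hy₂]; exact hy₁.symm
  obtain ⟨A, C, hM⟩ := master
  have hw' : igBar w = withCtx (u.map igBar) (igOf e) (v.map igBar) := by
    rw [hw]; exact igBar_withCtx u v _
  have hM2 : igOf e = withCtx (oMulO A (u.map igBar)) (igOf e) (oMulO (v.map igBar) C) := by
    rw [← withCtx_withCtx, ← hw']; exact hM
  obtain ⟨ua, hua⟩ := omap_surj (oMulO A (u.map igBar))
  obtain ⟨uc, huc⟩ := omap_surj (oMulO (v.map igBar) C)
  have hWbar : igBar (withCtx ua (FreeSemigroup.of e) uc) = igOf e := by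
    rw [igBar_withCtx, hua, huc]
    exact hM2.symm
  have hsup : Superl (igOf e) (wordList (withCtx ua (FreeSemigroup.of e) uc)) :=
    superl_word hWbar
  obtain ⟨hGL, hGR⟩ := hsup (olist ua) e (olist uc) (wordList_withCtx ua uc e) (grD_refl _)
  rw [lmulP_olist, hua] at hGL
  rw [rmulP_olist, huc] at hGR
  refine ⟨hwreg, ?_, ?_⟩
  · -- GreenL (igBar (leftCtx u (of e))) ē
    have hl : igBar (leftCtx u (FreeSemigroup.of e)) = leftCtx (u.map igBar) (igOf e) := by
      cases u <;> rfl
    rw [hl]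
    cases u with
    | none => exact grL_refl _
    | some u' =>
        show GreenL (igBar u' * igOf e) (igOf e)
        cases A with
        | none => exact hGL
        | some a =>
            have : leftCtx (oMulO (some a) ((some u').map igBar)) (igOf e) =
                (a * igBar u') * igOf e := rfl
            rw [this] at hGL
            exact grL_peel hGL
  · -- GreenR ē (igBar (rightCtx (of e) v))
    have hr : igBar (rightCtx (FreeSemigroup.of e) v) = rightCtx (igOf e) (v.map igBar) := by
      cases v <;> rfl
    rw [hr]
    cases v with
    | none => exact grR_refl _
    | some v' =>
        show GreenR (igOf e) (igOf e * igBar v')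
        cases C with
        | none => exact hGR
        | some cc =>
            have : rightCtx (igOf e) (oMulO ((some v').map igBar) (some cc)) =
                igOf e * (igBar v' * cc) := rfl
            rw [this] at hGR
            exact grR_peel hGR
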